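/- Let n, n₀, n₁, n₂, m₀, m₁, m₂ be natural numbers with n₀ + n₁ + 2·n₂ = n = m₀ + m₁ + 2·m₂. If the block diagonal matrices D(n₀,n₁,n₂) = diag(I_{n₀}, −I_{n₁}, J, …, J) (n₂ copies of J) and D(m₀,m₁,m₂) = diag(I_{m₀}, −I_{m₁}, J, …, J) (m₂ copies of J) are conjugate in GL_n(ℤ), i.e. P·D(n₀,n₁,n₂)·P⁻¹ = D(m₀,m₁,m₂) for some P ∈ GL_n(ℤ), then n₀ = m₀, n₁ = m₁ and n₂ = m₂. -/

import Mathlib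

/-- The block diagonal `n × n` integer matrix `D(n₀,n₁,n₂) = diag(I_{n₀}, −I_{n₁}, J, …, J)`
(with `n₂` copies of `J = [[0,1],[1,0]]`), meant for `n₀ + n₁ + 2·n₂ = n`. -/
def blockD (n n₀ n₁ n₂ : ℕ) : Matrix (Fin n) (Fin n) ℤ :=
  Matrix.of fun i j =>
    if (i : ℕ) < n₀ then (if (j : ℕ) = (i : ℕ) then 1 else 0)
    else if (i : ℕ) < n₀ + n₁ then (if (j : ℕ) = (i : ℕ) then -1 else 0)
    else if ((i : ℕ) - (n₀ + n₁)) % 2 = 0 then (if (j : ℕ) = (i : ℕ) + 1 then 1 else 0)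
    else (if (j : ℕ) = (i : ℕ) - 1 then 1 else 0)


-- trace lemma
lemma blockD_trace (n n₀ n₁ n₂ : ℕ) (hn : n₀ + n₁ + 2 * n₂ = n) :
    Matrix.trace (blockD n n₀ n₁ n₂) = (n₀ : ℤ) - n₁ := by
  have hd : ∀ i : Fin n, blockD n n₀ n₁ n₂ i i =
      if (i : ℕ) < n₀ then 1 else if (i : ℕ) < n₀ + n₁ then -1 else 0 := by
    intro i
    simp only [blockD, Matrix.of_apply]
    split_ifs with h1 h2 h3 h4 h5 <;> first | rfl | omega
  rw [Matrix.trace]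
  simp only [Matrix.diag, hd]
  rw [Fin.sum_univ_eq_sum_range (fun i => if i < n₀ then (1:ℤ) else if i < n₀ + n₁ then -1 else 0)]
  rw [Finset.range_eq_Ico, ← Finset.sum_Ico_consecutive _ (Nat.zero_le (n₀+n₁)) (by omega : n₀+n₁ ≤ n),
      ← Finset.sum_Ico_consecutive _ (Nat.zero_le n₀) (by omega : n₀ ≤ n₀+n₁)]
  have h1 : ∑ i ∈ Finset.Ico 0 n₀, (if i < n₀ then (1:ℤ) else if i < n₀ + n₁ then -1 else 0) = n₀ := by
    rw [Finset.sum_congr rfl (fun i hi => if_pos (by simp at hi; omega))]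
    simp
  have h2 : ∑ i ∈ Finset.Ico n₀ (n₀+n₁), (if i < n₀ then (1:ℤ) else if i < n₀ + n₁ then -1 else 0) = -(n₁:ℤ) := by
    rw [Finset.sum_congr rfl (fun i hi => by
      simp at hi
      rw [if_neg (by omega), if_pos hi.2])]
    simp [Nat.card_Ico]
  have h3 : ∑ i ∈ Finset.Ico (n₀+n₁) n, (if i < n₀ then (1:ℤ) else if i < n₀ + n₁ then -1 else 0) = 0 := by
    rw [Finset.sum_congr rfl (fun i hi => by
      simp at hi
      rw [if_neg (by omega), if_neg (by omega)])]
    simp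
  rw [h1, h2, h3]; ring

open Matrix in
lemma blockD_mod2_apply (n n₀ n₁ n₂ : ℕ) (hn : n₀ + n₁ + 2 * n₂ = n) (i j : Fin n) :
    ((blockD n n₀ n₁ n₂).map (Int.cast : ℤ → ZMod 2) - 1) i j =
      if n₀ + n₁ ≤ (i : ℕ) ∧ n₀ + n₁ ≤ (j : ℕ) ∧
          ((i : ℕ) - (n₀ + n₁)) / 2 = ((j : ℕ) - (n₀ + n₁)) / 2 then 1 else 0 := by
  simp only [Matrix.sub_apply, Matrix.map_apply, Matrix.one_apply, blockD, Matrix.of_apply,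
    apply_ite (Int.cast : ℤ → ZMod 2), Int.cast_one, Int.cast_neg, Int.cast_zero, Fin.ext_iff]
  have hi := i.isLt
  have hj := j.isLt
  split_ifs <;> first | rfl | decide | omega

open Matrix in
lemma blockD_mod2_rank (n n₀ n₁ n₂ : ℕ) (hn : n₀ + n₁ + 2 * n₂ = n) :
    ((blockD n n₀ n₁ n₂).map (Int.cast : ℤ → ZMod 2) - 1).rank = n₂ := by
  set c := n₀ + n₁ with hc
  set N : Matrix (Fin n) (Fin n) (ZMod 2) :=
    (blockD n n₀ n₁ n₂).map (Int.cast : ℤ → ZMod 2) - 1 with hN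
  have hNapp : ∀ i j : Fin n, N i j =
      if c ≤ (i : ℕ) ∧ c ≤ (j : ℕ) ∧ ((i : ℕ) - c) / 2 = ((j : ℕ) - c) / 2 then 1 else 0 :=
    fun i j => blockD_mod2_apply n n₀ n₁ n₂ hn i j
  -- the embedding of the `k`-th block
  have he : ∀ k : Fin n₂, c + 2 * (k : ℕ) < n := fun k => by have := k.isLt; omega
  set e : Fin n₂ → Fin n := fun k => ⟨c + 2 * (k : ℕ), he k⟩ with hedef
  -- upper bound: N = B * Bᵀ
  set B : Matrix (Fin n) (Fin n₂) (ZMod 2) :=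
    Matrix.of (fun i k => if (i : ℕ) = c + 2 * (k : ℕ) ∨ (i : ℕ) = c + 2 * (k : ℕ) + 1
      then 1 else 0) with hB
  have hNB : N = B * Bᵀ := by
    ext i j
    rw [hNapp i j, Matrix.mul_apply]
    simp only [hB, Matrix.transpose_apply, Matrix.of_apply]
    by_cases hcond : c ≤ (i : ℕ) ∧ c ≤ (j : ℕ) ∧ ((i : ℕ) - c) / 2 = ((j : ℕ) - c) / 2
    · rw [if_pos hcond]
      obtain ⟨hci, hcj, hq⟩ := hcond
      have hk : ((i : ℕ) - c) / 2 < n₂ := by have := i.isLt; omega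
      rw [Finset.sum_eq_single (⟨((i : ℕ) - c) / 2, hk⟩ : Fin n₂)]
      · rw [if_pos (by simp; omega), if_pos (by simp; omega)]; ring
      · intro k _ hk'
        have hkne : (k : ℕ) ≠ ((i : ℕ) - c) / 2 := fun hh => hk' (Fin.ext hh)
        rw [if_neg (by omega), zero_mul]
      · intro habs; exact absurd (Finset.mem_univ _) habs
    · rw [if_neg hcond]
      refine (Finset.sum_eq_zero fun k _ => ?_).symm
      by_cases h1 : (i : ℕ) = c + 2 * (k : ℕ) ∨ (i : ℕ) = c + 2 * (k : ℕ) + 1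
      · by_cases h2 : (j : ℕ) = c + 2 * (k : ℕ) ∨ (j : ℕ) = c + 2 * (k : ℕ) + 1
        · exact absurd (by constructor; omega; constructor <;> omega) hcond
        · rw [if_neg h2, mul_zero]
      · rw [if_neg h1, zero_mul]
  have hub : N.rank ≤ n₂ := by
    rw [hNB]
    exact le_trans (Matrix.rank_mul_le_left B Bᵀ) (by simpa using Matrix.rank_le_card_width B)
  -- lower bound: R * N * Rᵀ = 1
  set R : Matrix (Fin n₂) (Fin n) (ZMod 2) :=
    Matrix.of (fun k i => if i = e k then 1 else 0) with hR
  have hRN : ∀ (k : Fin n₂) (j : Fin n), (R * N) k j = N (e k) j := by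
    intro k j
    rw [Matrix.mul_apply]
    simp [hR, ite_mul, zero_mul, one_mul, Finset.sum_ite_eq']
  have hRNR : R * N * Rᵀ = 1 := by
    ext k l
    rw [Matrix.mul_apply]
    simp only [Matrix.transpose_apply, hRN, hR, Matrix.of_apply, mul_ite, mul_one, mul_zero,
      Finset.sum_ite_eq', Finset.mem_univ, if_true]
    rw [← hR, hRN]
    rw [hNapp, Matrix.one_apply]
    have : (c ≤ ((e k : Fin n) : ℕ) ∧ c ≤ ((e l : Fin n) : ℕ) ∧
        (((e k : Fin n) : ℕ) - c) / 2 = (((e l : Fin n) : ℕ) - c) / 2) ↔ k = l := by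
      simp only [hedef]
      constructor
      · rintro ⟨-, -, hq⟩; exact Fin.ext (by omega)
      · rintro rfl; exact ⟨by omega, by omega, rfl⟩
    simp [this, Fin.ext_iff]
  have hlb : n₂ ≤ N.rank := by
    have h1 : (R * N * Rᵀ).rank = n₂ := by rw [hRNR, Matrix.rank_one]; simp
    calc n₂ = (R * N * Rᵀ).rank := h1.symm
      _ ≤ (R * N).rank := Matrix.rank_mul_le_left _ _
      _ ≤ N.rank := Matrix.rank_mul_le_right _ _
  omega

/-- **Classification of involutions in `GL_n(ℤ)` (uniqueness of the normal form),
Lemma 1.5.** If `D(n₀,n₁,n₂)` and `D(m₀,m₁,m₂)` (with `n₀+n₁+2n₂ = n = m₀+m₁+2m₂`)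
are conjugate in `GL_n(ℤ)`, then `n₀ = m₀`, `n₁ = m₁` and `n₂ = m₂`. -/
theorem blockD_conjugate_unique (n n₀ n₁ n₂ m₀ m₁ m₂ : ℕ)
    (hn : n₀ + n₁ + 2 * n₂ = n) (hm : m₀ + m₁ + 2 * m₂ = n)
    (P : GL (Fin n) ℤ)
    (h : (P : Matrix (Fin n) (Fin n) ℤ) * blockD n n₀ n₁ n₂ *
          ((P⁻¹ : GL (Fin n) ℤ) : Matrix (Fin n) (Fin n) ℤ) = blockD n m₀ m₁ m₂) :
    n₀ = m₀ ∧ n₁ = m₁ ∧ n₂ = m₂ := by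
  have hPinv : ((P⁻¹ : GL (Fin n) ℤ) : Matrix (Fin n) (Fin n) ℤ) *
      (P : Matrix (Fin n) (Fin n) ℤ) = 1 := P.inv_mul
  have hPinv' : (P : Matrix (Fin n) (Fin n) ℤ) *
      ((P⁻¹ : GL (Fin n) ℤ) : Matrix (Fin n) (Fin n) ℤ) = 1 := P.mul_inv
  -- trace invariant
  have htr : Matrix.trace (blockD n m₀ m₁ m₂) = Matrix.trace (blockD n n₀ n₁ n₂) := by
    rw [← h, Matrix.trace_mul_comm, ← Matrix.mul_assoc, hPinv, Matrix.one_mul]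
  rw [blockD_trace n n₀ n₁ n₂ hn, blockD_trace n m₀ m₁ m₂ hm] at htr
  -- mod 2 rank invariant
  set f : ℤ →+* ZMod 2 := Int.castRingHom (ZMod 2) with hf
  have hfc : ⇑f = (Int.cast : ℤ → ZMod 2) := rfl
  set Pf := ((P : Matrix (Fin n) (Fin n) ℤ)).map f with hPf
  set Qf := (((P⁻¹ : GL (Fin n) ℤ) : Matrix (Fin n) (Fin n) ℤ)).map f with hQf
  have hm1 : Pf * Qf = 1 := by
    rw [hPf, hQf, ← Matrix.map_mul, hPinv', Matrix.map_one f f.map_zero f.map_one]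
  have h2 : Pf * ((blockD n n₀ n₁ n₂).map f - 1) * Qf = (blockD n m₀ m₁ m₂).map f - 1 := by
    rw [Matrix.mul_sub, Matrix.mul_one, Matrix.sub_mul, ← Matrix.map_mul, ← Matrix.map_mul, h,
      hm1]
  have hdet : Pf.det * Qf.det = 1 := by rw [← Matrix.det_mul, hm1, Matrix.det_one]
  have hPdet : IsUnit Pf.det := IsUnit.of_mul_eq_one _ hdet
  have hQdet : IsUnit Qf.det := IsUnit.of_mul_eq_one _ (by rw [mul_comm] at hdet; exact hdet)
  have hrk : ((blockD n m₀ m₁ m₂).map f - 1).rank = ((blockD n n₀ n₁ n₂).map f - 1).rank := by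
    rw [← h2, Matrix.rank_mul_eq_left_of_isUnit_det Qf _ hQdet,
      Matrix.rank_mul_eq_right_of_isUnit_det Pf _ hPdet]
  rw [hfc, blockD_mod2_rank n n₀ n₁ n₂ hn, blockD_mod2_rank n m₀ m₁ m₂ hm] at hrk
  refine ⟨by omega, by omega, by omega⟩
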